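/- There exist five points in a triangle of unit area such that every three of them form a triangle of area at least 1/6. -/

import Mathlib

open MeasureTheory Pointwise ENNReal

noncomputable abbrev vv (a b : ℝ) : EuclideanSpace ℝ (Fin 2) :=
  (WithLp.equiv 2 (Fin 2 → ℝ)).symm ![a, b]

@[simp] lemma vv_zero (a b : ℝ) : vv a b 0 = a := rfl
@[simp] lemma vv_one (a b : ℝ) : vv a b 1 = b := rfl

lemma hullT0_eq : convexHull ℝ ({vv 0 0, vv 1 0, vv 0 1} : Set (EuclideanSpace ℝ (Fin 2)))
    = {x : EuclideanSpace ℝ (Fin 2) | 0 ≤ x 0 ∧ 0 ≤ x 1 ∧ x 0 + x 1 ≤ 1} := by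
  apply le_antisymm
  · apply convexHull_min
    · rintro x (rfl | rfl | rfl) <;> refine ⟨by norm_num, by norm_num, by norm_num⟩
    · rintro x ⟨hx0, hx1, hxs⟩ y ⟨hy0, hy1, hys⟩ a b ha hb hab
      refine ⟨?_, ?_, ?_⟩ <;>
        simp only [PiLp.add_apply, PiLp.smul_apply, smul_eq_mul]
      · positivity
      · positivity
      · nlinarith
  · rintro x ⟨hx0, hx1, hxs⟩
    have hx : x = x 0 • vv 1 0 + x 1 • vv 0 1 + (1 - x 0 - x 1) • vv 0 0 := by
      ext i; fin_cases i <;>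
        simp [PiLp.add_apply, PiLp.smul_apply]
    have hsum : x = ∑ i : Fin 3, ![x 0, x 1, 1 - x 0 - x 1] i • ![vv 1 0, vv 0 1, vv 0 0] i := by
      rw [Fin.sum_univ_three]; simpa using hx
    rw [hsum]
    refine (convex_convexHull ℝ _).sum_mem ?_ ?_ ?_
    · intro i _; fin_cases i <;> simp <;> linarith
    · rw [Fin.sum_univ_three]; simp
    · intro i _; fin_cases i <;> exact subset_convexHull ℝ _ (by simp)

lemma span_ne_top : affineSpan ℝ ({vv 1 0, vv 0 1} : Set (EuclideanSpace ℝ (Fin 2))) ≠ ⊤ := by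
  intro h
  have hd : vectorSpan ℝ ({vv 1 0, vv 0 1} : Set (EuclideanSpace ℝ (Fin 2)))
      = (⊤ : Submodule ℝ (EuclideanSpace ℝ (Fin 2))) := by
    rw [← direction_affineSpan, h, AffineSubspace.direction_top]
  rw [vectorSpan_pair] at hd
  have hm : vv 0 1 ∈ (ℝ ∙ (vv 1 0 -ᵥ vv 0 1)) := by rw [hd]; trivial
  rw [Submodule.mem_span_singleton] at hm
  obtain ⟨c, hc⟩ := hm
  have h1 := congrArg (fun v : EuclideanSpace ℝ (Fin 2) => v 0) hc
  have h2 := congrArg (fun v : EuclideanSpace ℝ (Fin 2) => v 1) hc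
  simp [PiLp.smul_apply, PiLp.sub_apply] at h1 h2
  linarith

lemma line_null : volume {x : EuclideanSpace ℝ (Fin 2) | x 0 + x 1 = 1} = 0 := by
  have hsub : {x : EuclideanSpace ℝ (Fin 2) | x 0 + x 1 = 1}
      ⊆ (affineSpan ℝ ({vv 1 0, vv 0 1} : Set (EuclideanSpace ℝ (Fin 2))) : Set _) := by
    intro x hx
    have : x = AffineMap.lineMap (vv 1 0) (vv 0 1) (x 1) := by
      ext i
      simp only [AffineMap.lineMap_apply, vsub_eq_sub, vadd_eq_add, PiLp.add_apply,
        PiLp.smul_apply, PiLp.sub_apply, smul_eq_mul]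
      have hxx : x 0 + x 1 = 1 := hx
      have hx' : x 0 = 1 - x 1 := by linarith
      fin_cases i <;> simp [hx'] <;> ring
    rw [this]
    exact AffineMap.lineMap_mem_affineSpan_pair _ _ _
  exact measure_mono_null hsub (Measure.addHaar_affineSubspace volume _ span_ne_top)

lemma sq_vol :
    volume {x : EuclideanSpace ℝ (Fin 2) | (0 ≤ x 0 ∧ x 0 ≤ 1) ∧ (0 ≤ x 1 ∧ x 1 ≤ 1)} = 1 := by
  have hp := EuclideanSpace.volume_preserving_symm_measurableEquiv_toLp (Fin 2)
  have hs : {x : EuclideanSpace ℝ (Fin 2) | (0 ≤ x 0 ∧ x 0 ≤ 1) ∧ (0 ≤ x 1 ∧ x 1 ≤ 1)}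
      = (MeasurableEquiv.toLp 2 (Fin 2 → ℝ)).symm ⁻¹'
        ((Set.univ : Set (Fin 2)).pi fun _ => Set.Icc (0:ℝ) 1) := by
    ext x
    simp only [Set.mem_preimage, Set.mem_univ_pi, Set.mem_Icc, Set.mem_setOf_eq,
      Fin.forall_fin_two]
    exact ⟨fun ⟨h1, h2⟩ => ⟨⟨h1.1, h1.2⟩, ⟨h2.1, h2.2⟩⟩,
      fun ⟨h1, h2⟩ => ⟨⟨h1.1, h1.2⟩, ⟨h2.1, h2.2⟩⟩⟩
  rw [hs, MeasurePreserving.measure_preimage hp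
    (MeasurableSet.univ_pi fun _ => measurableSet_Icc).nullMeasurableSet, volume_pi_pi]
  simp

lemma volT0 : volume (convexHull ℝ ({vv 0 0, vv 1 0, vv 0 1} : Set (EuclideanSpace ℝ (Fin 2))))
    = ENNReal.ofReal (1/2) := by
  set T0 := convexHull ℝ ({vv 0 0, vv 1 0, vv 0 1} : Set (EuclideanSpace ℝ (Fin 2))) with hT0
  set c : EuclideanSpace ℝ (Fin 2) := vv 1 1 with hc
  set T1 := (fun x => c - x) '' T0 with hT1
  have hvol1 : volume T1 = volume T0 := by
    have himg : T1 = c +ᵥ ((⇑(-(LinearMap.id : EuclideanSpace ℝ (Fin 2) →ₗ[ℝ]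
        EuclideanSpace ℝ (Fin 2)))) '' T0) := by
      rw [hT1]
      ext x
      simp only [Set.mem_image, Set.mem_vadd_set, LinearMap.neg_apply, LinearMap.id_apply]
      constructor
      · rintro ⟨y, hy, rfl⟩; exact ⟨-y, ⟨y, hy, rfl⟩, by simp [sub_eq_add_neg]⟩
      · rintro ⟨z, ⟨y, hy, rfl⟩, rfl⟩; exact ⟨y, hy, by simp [sub_eq_add_neg]⟩
    have hdet : LinearMap.det (-(LinearMap.id : EuclideanSpace ℝ (Fin 2) →ₗ[ℝ]
        EuclideanSpace ℝ (Fin 2))) = 1 := by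
      have h2 : (-(LinearMap.id : EuclideanSpace ℝ (Fin 2) →ₗ[ℝ] EuclideanSpace ℝ (Fin 2)))
          = (-1 : ℝ) • LinearMap.id := by simp
      rw [h2, LinearMap.det_smul, finrank_euclideanSpace_fin]
      simp
    rw [himg, measure_vadd, Measure.addHaar_image_linearMap, hdet]
    simp
  have hcompact : IsCompact T0 := by
    rw [hT0]
    exact (Set.toFinite _).isCompact_convexHull ℝ
  have hT1m : MeasurableSet T1 :=
    ((hcompact.image (continuous_const.sub continuous_id)).isClosed).measurableSet
  have hunion : T0 ∪ T1
      = {x : EuclideanSpace ℝ (Fin 2) | (0 ≤ x 0 ∧ x 0 ≤ 1) ∧ (0 ≤ x 1 ∧ x 1 ≤ 1)} := by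
    ext x
    constructor
    · rintro (hx | ⟨y, hy, rfl⟩)
      · rw [hT0, hullT0_eq] at hx
        obtain ⟨h1, h2, h3⟩ := hx
        exact ⟨⟨h1, by linarith⟩, ⟨h2, by linarith⟩⟩
      · rw [hT0, hullT0_eq] at hy
        obtain ⟨h1, h2, h3⟩ := hy
        have e0 : (c - y) 0 = 1 - y 0 := by simp [hc, PiLp.sub_apply]
        have e1 : (c - y) 1 = 1 - y 1 := by simp [hc, PiLp.sub_apply]
        beta_reduce
        rw [Set.mem_setOf_eq, e0, e1]
        constructor <;> constructor <;> linarith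
    · rintro ⟨⟨h1, h2⟩, ⟨h3, h4⟩⟩
      by_cases hs : x 0 + x 1 ≤ 1
      · left; rw [hT0, hullT0_eq]; exact ⟨h1, h3, hs⟩
      · right
        refine ⟨c - x, ?_, sub_sub_cancel c x⟩
        rw [hT0, hullT0_eq]
        have e0 : (c - x) 0 = 1 - x 0 := by simp [hc, PiLp.sub_apply]
        have e1 : (c - x) 1 = 1 - x 1 := by simp [hc, PiLp.sub_apply]
        rw [Set.mem_setOf_eq, e0, e1]
        refine ⟨by linarith, by linarith, by linarith⟩
  have hinter : volume (T0 ∩ T1) = 0 := by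
    refine measure_mono_null ?_ line_null
    rintro x ⟨hx0, y, hy, rfl⟩
    rw [hT0, hullT0_eq] at hx0 hy
    have e0 : (c - y) 0 = 1 - y 0 := by simp [hc, PiLp.sub_apply]
    have e1 : (c - y) 1 = 1 - y 1 := by simp [hc, PiLp.sub_apply]
    beta_reduce at hx0 ⊢
    rw [Set.mem_setOf_eq, e0, e1] at hx0 ⊢
    obtain ⟨h1, h2, h3⟩ := hx0
    have := hy.2.2
    linarith
  have hadd : volume T0 + volume T0 = 1 := by
    have := measure_union_add_inter (μ := volume) T0 hT1m
    rw [hunion, sq_vol, hinter, add_zero] at this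
    rw [hvol1] at this
    exact this.symm
  have hfin : volume T0 ≠ ⊤ := by
    intro h; rw [h] at hadd; simp at hadd
  have htr : (volume T0).toReal = 1/2 := by
    have h1 : (volume T0 + volume T0).toReal = (1 : ℝ≥0∞).toReal := by rw [hadd]
    rw [ENNReal.toReal_add hfin hfin, ENNReal.toReal_one] at h1
    linarith
  rw [← ENNReal.ofReal_toReal hfin, htr]

lemma vol_hull (p q r : EuclideanSpace ℝ (Fin 2)) :
    volume (convexHull ℝ ({p, q, r} : Set (EuclideanSpace ℝ (Fin 2))))
      = ENNReal.ofReal (|(q 0 - p 0) * (r 1 - p 1) - (r 0 - p 0) * (q 1 - p 1)| / 2) := by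
  set M : Matrix (Fin 2) (Fin 2) ℝ := !![q 0 - p 0, r 0 - p 0; q 1 - p 1, r 1 - p 1] with hM
  set L := Matrix.toEuclideanLin M with hL
  have hdet : LinearMap.det L = M.det := by
    have h : L = ((WithLp.linearEquiv 2 ℝ (Fin 2 → ℝ)).symm.conj (Matrix.toLin' M)) := rfl
    rw [h, LinearEquiv.conj_apply, LinearMap.comp_assoc, LinearMap.det_conj,
      LinearMap.det_toLin']
  have key : ({p, q, r} : Set (EuclideanSpace ℝ (Fin 2)))
      = (fun x => p + L x) '' {vv 0 0, vv 1 0, vv 0 1} := by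
    rw [Set.image_insert_eq, Set.image_insert_eq, Set.image_singleton]
    have e0 : p + L (vv 0 0) = p := by
      have h0 : L (vv 0 0) = 0 := by
        have hz : vv 0 0 = 0 := by ext i; fin_cases i <;> rfl
        rw [hz, map_zero]
      rw [h0, add_zero]
    have e1 : p + L (vv 1 0) = q := by
      ext i
      have h1 : L (vv 1 0) i = M i 0 := by
        rw [hL, Matrix.toEuclideanLin_apply]
        simp [Matrix.mulVec, dotProduct, Fin.sum_univ_two]
      rw [PiLp.add_apply, h1]
      fin_cases i <;> simp [hM]
    have e2 : p + L (vv 0 1) = r := by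
      ext i
      have h1 : L (vv 0 1) i = M i 1 := by
        rw [hL, Matrix.toEuclideanLin_apply]
        simp [Matrix.mulVec, dotProduct, Fin.sum_univ_two]
      rw [PiLp.add_apply, h1]
      fin_cases i <;> simp [hM]
    rw [e0, e1, e2]
  have gaff : ∃ g : EuclideanSpace ℝ (Fin 2) →ᵃ[ℝ] EuclideanSpace ℝ (Fin 2),
      ⇑g = fun x => p + L x := by
    refine ⟨⟨fun x => p + L x, L, ?_⟩, rfl⟩
    intro x v
    show p + L (v + x) = L v + (p + L x)
    rw [map_add]; abel
  obtain ⟨g, hg⟩ := gaff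
  rw [key, ← hg, ← AffineMap.image_convexHull]
  have himg : ⇑g '' (convexHull ℝ {vv 0 0, vv 1 0, vv 0 1})
      = p +ᵥ (⇑L '' (convexHull ℝ {vv 0 0, vv 1 0, vv 0 1})) := by
    rw [hg]
    ext x
    simp [Set.mem_vadd_set, Set.mem_image]
  rw [himg, measure_vadd, Measure.addHaar_image_linearMap, volT0, hdet,
    ← ENNReal.ofReal_mul (abs_nonneg _)]
  congr 1
  rw [hM, Matrix.det_fin_two_of]
  ring

open MeasureTheory

noncomputable def triArea (p q r : EuclideanSpace ℝ (Fin 2)) : ℝ :=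
  (volume (convexHull ℝ ({p, q, r} : Set (EuclideanSpace ℝ (Fin 2))))).toReal

lemma triArea_eq (p q r : EuclideanSpace ℝ (Fin 2)) :
    triArea p q r = |(q 0 - p 0) * (r 1 - p 1) - (r 0 - p 0) * (q 1 - p 1)| / 2 := by
  rw [triArea, vol_hull, ENNReal.toReal_ofReal (by positivity)]

theorem stmt_4 :
    ∃ (A B C : EuclideanSpace ℝ (Fin 2)) (p : Fin 5 → EuclideanSpace ℝ (Fin 2)),
      triArea A B C = 1 ∧
      (∀ i, p i ∈ convexHull ℝ ({A, B, C} : Set (EuclideanSpace ℝ (Fin 2)))) ∧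
      (∀ i j k : Fin 5, i ≠ j → i ≠ k → j ≠ k →
        1 / 6 ≤ triArea (p i) (p j) (p k)) := by
  refine ⟨vv 0 0, vv 1 0, vv 0 2,
    ![vv 0 0, vv (1/2) 0, vv (2/3) (2/3), vv (1/3) (4/3), vv 0 1], ?_, ?_, ?_⟩
  · rw [triArea_eq]; norm_num
  · have hconv := convex_convexHull ℝ ({vv 0 0, vv 1 0, vv 0 2} : Set (EuclideanSpace ℝ (Fin 2)))
    have hA : vv 0 0 ∈ convexHull ℝ ({vv 0 0, vv 1 0, vv 0 2} : Set (EuclideanSpace ℝ (Fin 2))) :=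
      subset_convexHull ℝ _ (by simp)
    have hB : vv 1 0 ∈ convexHull ℝ ({vv 0 0, vv 1 0, vv 0 2} : Set (EuclideanSpace ℝ (Fin 2))) :=
      subset_convexHull ℝ _ (by simp)
    have hC : vv 0 2 ∈ convexHull ℝ ({vv 0 0, vv 1 0, vv 0 2} : Set (EuclideanSpace ℝ (Fin 2))) :=
      subset_convexHull ℝ _ (by simp)
    intro i
    fin_cases i
    · exact hA
    · have h : vv (1/2) 0 = (1/2 : ℝ) • vv 0 0 + (1/2 : ℝ) • vv 1 0 := by
        ext j; fin_cases j <;> simp [PiLp.add_apply, PiLp.smul_apply] <;> norm_num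
      refine h ▸ hconv hA hB (by norm_num : (0:ℝ) ≤ 1/2) (by norm_num : (0:ℝ) ≤ 1/2) (by norm_num)
    · have h : vv (2/3) (2/3) = (2/3 : ℝ) • vv 1 0 + (1/3 : ℝ) • vv 0 2 := by
        ext j; fin_cases j <;> simp [PiLp.add_apply, PiLp.smul_apply] <;> norm_num
      refine h ▸ hconv hB hC (by norm_num : (0:ℝ) ≤ 2/3) (by norm_num : (0:ℝ) ≤ 1/3) (by norm_num)
    · have h : vv (1/3) (4/3) = (1/3 : ℝ) • vv 1 0 + (2/3 : ℝ) • vv 0 2 := by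
        ext j; fin_cases j <;> simp [PiLp.add_apply, PiLp.smul_apply] <;> norm_num
      refine h ▸ hconv hB hC (by norm_num : (0:ℝ) ≤ 1/3) (by norm_num : (0:ℝ) ≤ 2/3) (by norm_num)
    · have h : vv 0 1 = (1/2 : ℝ) • vv 0 0 + (1/2 : ℝ) • vv 0 2 := by
        ext j; fin_cases j <;> simp [PiLp.add_apply, PiLp.smul_apply] <;> norm_num
      refine h ▸ hconv hA hC (by norm_num : (0:ℝ) ≤ 1/2) (by norm_num : (0:ℝ) ≤ 1/2) (by norm_num)
  · intro i j k hij hik hjk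
    fin_cases i <;> fin_cases j <;> fin_cases k <;>
      first
      | (exact absurd rfl hij)
      | (exact absurd rfl hik)
      | (exact absurd rfl hjk)
      | (rw [triArea_eq]
         norm_num [Matrix.cons_val_zero, Matrix.cons_val_one, Matrix.head_cons,
           Matrix.cons_val_two, Matrix.tail_cons, Matrix.cons_val_three, Matrix.cons_val_four,
           abs_sub_comm, abs_of_nonneg, abs_of_nonpos])
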